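/- arXiv:2505.05179 — 2 statements merged into one kernel-verified Lean document; each statement's English description precedes it below -/
import Mathlib

section
/- Let Γ be a nonempty connected simple graph such that every internal set of Γ is a singleton (an internal vertex) and such that the set Int(Γ) of internal vertices is nonempty. Then every external vertex of Γ is adjacent to some internal vertex of Γ. -/
open SimpleGraph

/-- The link of a set `S` of vertices: all vertices adjacent to every vertex of `S`.
(For `S = ∅` this is all of `V`.) -/
def link {V : Type*} (G : SimpleGraph V) (S : Set V) : Set V :=
  {v : V | ∀ s ∈ S, G.Adj v s}

/-- A nonempty set of vertices is internal if its link is not a clique. -/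
def IsInternalSet {V : Type*} (G : SimpleGraph V) (S : Set V) : Prop :=
  S.Nonempty ∧ ¬ G.IsClique (link G S)

/-- A vertex is internal if its neighborhood is not a clique. -/
def IsInternalVertex {V : Type*} (G : SimpleGraph V) (v : V) : Prop :=
  ¬ G.IsClique (G.neighborSet v)

/-- The induced subgraph on the internal vertices. -/
def intGraph {V : Type*} (G : SimpleGraph V) :
    SimpleGraph ↥{v : V | IsInternalVertex G v} :=
  G.induce {v : V | IsInternalVertex G v}

/-- A graph is H-rigid if it is locally finite, all its internal sets are singletons,
and every nonempty finite set of vertices with nonempty link induces a subgraph all of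
whose connected components are complete. -/
def HRigid {V : Type*} (G : SimpleGraph V) : Prop :=
  (∀ v : V, (G.neighborSet v).Finite) ∧
  (∀ S : Set V, IsInternalSet G S → ∃ v : V, S = {v}) ∧
  (∀ S : Set V, S.Finite → S.Nonempty → (link G S).Nonempty →
    ∀ u w : ↥S, (G.induce S).Reachable u w → u = w ∨ (G.induce S).Adj u w)

/-- The eccentricity of a vertex: the sup of extended graph distances to all vertices. -/
noncomputable def eccentricity {V : Type*} (G : SimpleGraph V) (t : V) : ℕ∞ :=
  ⨆ s : V, G.edist t s

/-- The radius of a graph, valued in `ℕ∞`. -/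
noncomputable def graphRadius {V : Type*} (G : SimpleGraph V) : ℕ∞ :=
  ⨅ t : V, eccentricity G t

/-- The infinite line graph on `ℤ`: `i` and `j` adjacent iff `|i - j| = 1`. -/
def lineZ : SimpleGraph ℤ where
  Adj i j := |i - j| = 1
  symm := ⟨by intro i j h; rwa [abs_sub_comm]⟩
  loopless := ⟨by intro i h; simp at h⟩

/-- The cycle graph on `ZMod n`: `i` and `j` adjacent iff `i - j = 1` or `j - i = 1`. -/
def cycleZMod (n : ℕ) : SimpleGraph (ZMod n) :=
  SimpleGraph.circulantGraph ({1} : Set (ZMod n))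

/-- In a nonempty connected graph all of whose internal sets are singletons
and which has at least one internal vertex, every external vertex is adjacent to some
internal vertex. -/
theorem stmt0 {V : Type*} (G : SimpleGraph V) (hconn : G.Connected)
    (hsing : ∀ S : Set V, IsInternalSet G S → ∃ v : V, S = {v})
    (hne : ∃ v : V, IsInternalVertex G v) :
    ∀ v : V, ¬ IsInternalVertex G v →
      ∃ w : V, IsInternalVertex G w ∧ G.Adj v w := by
  intro v hv
  obtain ⟨u0, hu0⟩ := hne
  have key : ∀ n : ℕ, ∀ u : V, IsInternalVertex G u → G.dist u v = n →
      ∃ w : V, IsInternalVertex G w ∧ G.Adj v w := by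
    intro n
    induction n using Nat.strong_induction_on with
    | _ n ih =>
      intro u hu hdist
      have huv : u ≠ v := fun h => hv (h ▸ hu)
      have hnpos : 0 < n := by
        rcases Nat.eq_zero_or_pos n with h0 | h
        · exact absurd (((hconn u v).dist_eq_zero_iff).mp (h0 ▸ hdist)) huv
        · exact h
      obtain ⟨p, hp⟩ := (hconn u v).exists_walk_length_eq_dist
      rw [hdist] at hp
      cases p with
      | nil => simp at hp; omega
      | cons h q =>
        rename_i x
        simp only [SimpleGraph.Walk.length_cons] at hp
        by_cases hx : IsInternalVertex G x
        · have hdx : G.dist x v ≤ n - 1 := by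
            have := G.dist_le q
            omega
          exact ih (G.dist x v) (by omega) x hx rfl
        · -- x external
          cases q with
          | nil =>
            -- x = v, so u adjacent to v
            exact ⟨u, hu, h.symm⟩
          | cons h' r =>
            rename_i y
            simp only [SimpleGraph.Walk.length_cons] at hp
            have huy : u ≠ y := by
              intro heq
              have : G.dist u v ≤ r.length := heq ▸ G.dist_le r
              omega
            have hmemu : u ∈ G.neighborSet x := G.mem_neighborSet x u |>.mpr h.symm
            have hmemy : y ∈ G.neighborSet x := G.mem_neighborSet x y |>.mpr h'
            have hclique : G.IsClique (G.neighborSet x) := not_not.mp hx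
            have hadj : G.Adj u y := hclique hmemu hmemy huy
            have : G.dist u v ≤ 1 + r.length := by
              calc G.dist u v ≤ G.dist u y + G.dist y v := (hconn).dist_triangle
                _ ≤ 1 + r.length := by
                    gcongr
                    · exact (SimpleGraph.dist_eq_one_iff_adj.mpr hadj).le
                    · exact G.dist_le r
            omega
  exact key (G.dist u0 v) u0 hu0 rfl
end

section
/- Let Γ be a nonempty connected simple graph such that every internal set of Γ is a singleton, and suppose the set Int(Γ) of internal vertices is nonempty. Then Radius(Γ) ≤ Radius(Int(Γ)) + 1, where Int(Γ) is the induced subgraph of Γ on the internal vertices and both radii are computed in ℕ∞. -/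
open SimpleGraph

private def inclHom {V : Type*} (G : SimpleGraph V) (S : Set V) : G.induce S →g G :=
  ⟨Subtype.val, fun h => h⟩

/-- For a nonempty connected graph all of whose internal sets are singletons,
with at least one internal vertex, `Radius(Γ) ≤ Radius(Int(Γ)) + 1`. -/
theorem stmt1 {V : Type*} (G : SimpleGraph V) (hconn : G.Connected)
    (hsing : ∀ S : Set V, IsInternalSet G S → ∃ v : V, S = {v})
    (hne : {v : V | IsInternalVertex G v}.Nonempty) :
    graphRadius G ≤ graphRadius (intGraph G) + 1 := by
  classical
  -- Every vertex is internal or adjacent to an internal vertex.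
  have hA : ∀ s : V, ∃ u : V, IsInternalVertex G u ∧ (s = u ∨ G.Adj s u) := by
    intro s
    by_cases hs : IsInternalVertex G s
    · exact ⟨s, hs, Or.inl rfl⟩
    obtain ⟨w, hw⟩ := hne
    by_cases hadj : G.Adj s w
    · exact ⟨w, hw, Or.inr hadj⟩
    have hnsw : s ≠ w := fun h => hs (h ▸ hw)
    obtain ⟨p, hp⟩ := (hconn s w).exists_walk_length_eq_dist
    cases p with
    | nil => exact absurd rfl hnsw
    | cons h q =>
      cases q with
      | nil => exact ⟨w, hw, Or.inr h⟩
      | cons h' q' =>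
        rename_i b c
        have hsc : s ≠ c := by
          intro e
          have := G.dist_le (q'.copy e.symm rfl)
          rw [Walk.length_copy, ← hp] at this
          simp [Walk.length_cons] at this
        have hnadj : ¬ G.Adj s c := by
          intro a
          have := G.dist_le (Walk.cons a q')
          rw [← hp] at this
          simp [Walk.length_cons] at this
        refine ⟨b, ?_, Or.inr h⟩
        intro hcl
        exact hnadj (hcl (by simpa using h.symm) (by simpa using h') hsc)
  set S := {v : V | IsInternalVertex G v}
  -- edist in G is at most edist in intGraph
  have hB : ∀ t u : S, G.edist ↑t ↑u ≤ (intGraph G).edist t u := by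
    intro t u
    by_cases hr : (intGraph G).Reachable t u
    · obtain ⟨p, hp⟩ := hr.exists_walk_length_eq_edist
      calc G.edist ↑t ↑u ≤ ((p.map (inclHom G S)).length : ℕ∞) := by exact edist_le (p.map (inclHom G S))
        _ = (p.length : ℕ∞) := by exact congrArg Nat.cast (Walk.length_map (f := inclHom G S) (p := p))
        _ = _ := hp
    · rw [edist_eq_top_of_not_reachable hr]; exact le_top
  -- pick internal vertex with minimal eccentricity in intGraph
  have : Nonempty S := hne.to_subtype
  obtain ⟨m, ⟨t0, rfl⟩, hmin⟩ := (IsWellFounded.wf (α := ℕ∞) (r := (· < ·))).has_min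
    (Set.range fun t : S => eccentricity (intGraph G) t) (Set.range_nonempty _)
  have hrad : graphRadius (intGraph G) = eccentricity (intGraph G) t0 :=
    le_antisymm (iInf_le _ t0) (le_iInf fun t => not_lt.1 (hmin _ ⟨t, rfl⟩))
  rw [hrad]
  calc graphRadius G ≤ eccentricity G ↑t0 := iInf_le _ _
    _ ≤ eccentricity (intGraph G) t0 + 1 := by
        refine iSup_le fun s => ?_
        obtain ⟨u, hu, hcase⟩ := hA s
        have hle : (intGraph G).edist t0 ⟨u, hu⟩ ≤ eccentricity (intGraph G) t0 :=
          le_iSup (fun x => (intGraph G).edist t0 x) _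
        rcases hcase with rfl | hadj
        · calc G.edist ↑t0 s ≤ (intGraph G).edist t0 ⟨s, hu⟩ := hB t0 ⟨s, hu⟩
            _ ≤ eccentricity (intGraph G) t0 := hle
            _ ≤ _ := self_le_add_right _ 1
        · calc G.edist ↑t0 s ≤ G.edist ↑t0 u + G.edist u s := G.edist_triangle
            _ ≤ eccentricity (intGraph G) t0 + 1 := by
                refine add_le_add ((hB t0 ⟨u, hu⟩).trans hle) ?_
                rw [(edist_eq_one_iff_adj).2 hadj.symm]
end
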